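/- Continuous bootstrap lemma (core of the proof of Theorem 4.3): Let C > 0, let r ≥ 3 be an integer, let A ∈ [0,1], ε ∈ (0,1], T > 0, and let N : [0,T] → [0,∞) be a differentiable function with N(0) ≤ ε² such that for every t ∈ [0,T], if N(t) ≤ (9/4)ε² then |N′(t)| ≤ C·(A·N(t)^{3/2} + N(t)^{(r+1)/2}). Then there exists a constant c > 0 depending only on C and r (for instance c = 5/(4C(3/2)^{r+1})) such that N(t) ≤ (9/4)ε² for every t ∈ [0,T] with t ≤ c/(Aε + ε^{r−1}). -/

import Mathlib

/-- Continuous bootstrap lemma, core of the proof of Theorem 4.3.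
If `N : [0,T] → [0,∞)` is differentiable, `N(0) ≤ ε²`, and
`|N'(t)| ≤ C (A N(t)^{3/2} + N(t)^{(r+1)/2})` whenever `N(t) ≤ (9/4)ε²`, then with
`c = 5/(4C(3/2)^{r+1})` one has `N(t) ≤ (9/4)ε²` for all `t ∈ [0,T]` with
`t ≤ c/(Aε + ε^{r-1})`. -/
theorem continuous_bootstrap
    (C : ℝ) (hC : 0 < C) (r : ℕ) (hr : 3 ≤ r)
    (A : ℝ) (hA0 : 0 ≤ A) (hA1 : A ≤ 1) (ε : ℝ) (hε0 : 0 < ε) (hε1 : ε ≤ 1)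
    (T : ℝ) (hT : 0 < T) (N N' : ℝ → ℝ)
    (hNpos : ∀ t ∈ Set.Icc (0 : ℝ) T, 0 ≤ N t)
    (hNdiff : ∀ t ∈ Set.Icc (0 : ℝ) T, HasDerivWithinAt N (N' t) (Set.Icc (0 : ℝ) T) t)
    (hN0 : N 0 ≤ ε ^ 2)
    (hNder : ∀ t ∈ Set.Icc (0 : ℝ) T, N t ≤ 9 / 4 * ε ^ 2 →
      |N' t| ≤ C * (A * N t ^ ((3 : ℝ) / 2) + N t ^ (((r : ℝ) + 1) / 2))) :
    ∀ t ∈ Set.Icc (0 : ℝ) T,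
      t ≤ (5 / (4 * C * (3 / 2 : ℝ) ^ (r + 1))) / (A * ε + ε ^ (r - 1)) →
      N t ≤ 9 / 4 * ε ^ 2 := by
  intro t ht htm
  obtain ⟨ht0, htT⟩ := ht
  by_contra hgt
  push_neg at hgt
  -- notation
  set b : ℝ := 3 / 2 * ε with hbdef
  have hb0 : 0 < b := by positivity
  have hbsq : 9 / 4 * ε ^ 2 = b ^ 2 := by rw [hbdef]; ring
  set D : ℝ := A * ε + ε ^ (r - 1) with hDdef
  have hD0 : 0 < D := by positivity
  set M : ℝ := C * (3 / 2 : ℝ) ^ (r + 1) * D with hMdef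
  have hM0 : 0 < M := by positivity
  -- the bad set
  set S : Set ℝ := {s | s ∈ Set.Icc (0 : ℝ) t ∧ 9 / 4 * ε ^ 2 ≤ N s} with hSdef
  have hSne : S.Nonempty := ⟨t, ⟨⟨ht0, le_refl t⟩, hgt.le⟩⟩
  have hItT : Set.Icc (0 : ℝ) t ⊆ Set.Icc (0 : ℝ) T :=
    Set.Icc_subset_Icc le_rfl htT
  have hcont : ContinuousOn N (Set.Icc (0 : ℝ) t) := fun s hs =>
    ((hNdiff s (hItT hs)).continuousWithinAt).mono hItT
  have hScl : IsClosed S := by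
    have h : S = Set.Icc (0:ℝ) t ∩ N ⁻¹' Set.Ici (9 / 4 * ε ^ 2) := by
      ext s; simp [hSdef, Set.mem_Ici]
    rw [h]
    exact hcont.preimage_isClosed_of_isClosed isClosed_Icc isClosed_Ici
  have hSbd : BddBelow S := ⟨0, fun s hs => hs.1.1⟩
  set τ : ℝ := sInf S with hτdef
  have hτS : τ ∈ S := hScl.csInf_mem hSne hSbd
  obtain ⟨⟨hτ0, hτt⟩, hτge⟩ := hτS
  -- τ > 0
  have hτpos : 0 < τ := by
    rcases lt_or_eq_of_le hτ0 with h | h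
    · exact h
    · exfalso; rw [← h] at hτge; nlinarith
  -- for s < τ in [0,t], N s < 9/4 ε²
  have hlt : ∀ s ∈ Set.Ico (0 : ℝ) τ, N s < 9 / 4 * ε ^ 2 := by
    intro s hs
    by_contra hge
    push_neg at hge
    have : s ∈ S := ⟨⟨hs.1, hs.2.le.trans hτt⟩, hge⟩
    exact absurd (csInf_le hSbd this) (not_le.mpr hs.2)
  -- N τ ≤ 9/4 ε² by continuity from the left
  have hτle : N τ ≤ 9 / 4 * ε ^ 2 := by
    have hsub : Set.Ioo (0 : ℝ) τ ⊆ Set.Icc (0 : ℝ) t := fun s hs =>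
      ⟨hs.1.le, hs.2.le.trans hτt⟩
    have hten : Filter.Tendsto N (nhdsWithin τ (Set.Ioo (0 : ℝ) τ)) (nhds (N τ)) :=
      ((hcont τ ⟨hτ0, hτt⟩).mono hsub).tendsto
    have hnb : (nhdsWithin τ (Set.Ioo (0 : ℝ) τ)).NeBot := by
      rw [← mem_closure_iff_nhdsWithin_neBot, closure_Ioo (ne_of_lt hτpos)]
      exact Set.right_mem_Icc.mpr hτpos.le
    refine le_of_tendsto hten ?_
    filter_upwards [eventually_mem_nhdsWithin] with s hs
    exact (hlt s (Set.Ioo_subset_Ico_self hs)).le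
  -- N s ≤ 9/4 ε² on [0, τ]
  have hbound : ∀ s ∈ Set.Icc (0 : ℝ) τ, N s ≤ 9 / 4 * ε ^ 2 := by
    intro s hs
    rcases lt_or_eq_of_le hs.2 with h | h
    · exact (hlt s ⟨hs.1, h⟩).le
    · rw [h]; exact hτle
  have hIτT : Set.Icc (0 : ℝ) τ ⊆ Set.Icc (0 : ℝ) T :=
    Set.Icc_subset_Icc le_rfl (hτt.trans htT)
  -- derivative bound on [0,τ]
  have hder : ∀ s ∈ Set.Icc (0 : ℝ) τ, ‖N' s‖ ≤ M * ε ^ 2 := by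
    intro s hs
    have hsT : s ∈ Set.Icc (0 : ℝ) T := hIτT hs
    have hNs0 : 0 ≤ N s := hNpos s hsT
    have hNsle : N s ≤ b ^ 2 := by rw [← hbsq]; exact hbound s hs
    have key := hNder s hsT (hbound s hs)
    have h32 : (b ^ 2 : ℝ) ^ ((3 : ℝ) / 2) = b ^ 3 := by
      rw [← Real.rpow_natCast b 2, ← Real.rpow_mul hb0.le, ← Real.rpow_natCast b 3]
      norm_num
    have hr1 : (b ^ 2 : ℝ) ^ (((r : ℝ) + 1) / 2) = b ^ (r + 1) := by
      rw [← Real.rpow_natCast b 2, ← Real.rpow_mul hb0.le, ← Real.rpow_natCast b (r + 1)]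
      push_cast; ring_nf
    have m1 : N s ^ ((3 : ℝ) / 2) ≤ b ^ 3 := by
      rw [← h32]; exact Real.rpow_le_rpow hNs0 hNsle (by norm_num)
    have m2 : N s ^ (((r : ℝ) + 1) / 2) ≤ b ^ (r + 1) := by
      rw [← hr1]; refine Real.rpow_le_rpow hNs0 hNsle (by positivity)
    have step1 : ‖N' s‖ ≤ C * (A * b ^ 3 + b ^ (r + 1)) := by
      rw [Real.norm_eq_abs]
      refine key.trans ?_
      have h1 : A * N s ^ ((3 : ℝ) / 2) ≤ A * b ^ 3 :=
        mul_le_mul_of_nonneg_left m1 hA0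
      exact mul_le_mul_of_nonneg_left (add_le_add h1 m2) hC.le
    refine step1.trans ?_
    -- C (A b³ + b^{r+1}) ≤ M ε²
    have hb3 : b ^ 3 = (3 / 2 : ℝ) ^ 3 * ε ^ 3 := by rw [hbdef]; ring
    have hbr : b ^ (r + 1) = (3 / 2 : ℝ) ^ (r + 1) * ε ^ (r + 1) := by
      rw [hbdef, mul_pow]
    have hpow : (3 / 2 : ℝ) ^ 3 ≤ (3 / 2 : ℝ) ^ (r + 1) :=
      pow_le_pow_right₀ (by norm_num) (by omega)
    have hεr : ε ^ (r - 1) * ε ^ 2 = ε ^ (r + 1) := by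
      rw [← pow_add]; congr 1; omega
    have hε3 : (0:ℝ) < ε ^ 3 := by positivity
    rw [hMdef, hDdef]
    have e1 : C * (A * b ^ 3 + b ^ (r + 1))
        ≤ C * ((3 / 2 : ℝ) ^ (r + 1) * (A * ε ^ 3) + (3 / 2 : ℝ) ^ (r + 1) * ε ^ (r + 1)) := by
      rw [hb3, hbr]
      have h1 : A * ((3 / 2 : ℝ) ^ 3 * ε ^ 3) ≤ (3 / 2 : ℝ) ^ (r + 1) * (A * ε ^ 3) := by
        have h2 := mul_le_mul_of_nonneg_right hpow (mul_nonneg hA0 hε3.le)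
        calc A * ((3 / 2 : ℝ) ^ 3 * ε ^ 3) = (3 / 2 : ℝ) ^ 3 * (A * ε ^ 3) := by ring
          _ ≤ (3 / 2 : ℝ) ^ (r + 1) * (A * ε ^ 3) := h2
      exact mul_le_mul_of_nonneg_left (add_le_add h1 le_rfl) hC.le
    refine e1.trans (le_of_eq ?_)
    have : A * ε ^ 3 = A * ε * ε ^ 2 := by ring
    rw [this, ← hεr]; ring
  -- mean value inequality
  have hdiff' : ∀ s ∈ Set.Icc (0 : ℝ) τ, HasDerivWithinAt N (N' s) (Set.Icc (0 : ℝ) τ) s :=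
    fun s hs => (hNdiff s (hIτT hs)).mono hIτT
  have hmvt := Convex.norm_image_sub_le_of_norm_hasDerivWithin_le hdiff' hder
    (convex_Icc (0 : ℝ) τ) (Set.left_mem_Icc.mpr hτpos.le) (Set.right_mem_Icc.mpr hτpos.le)
  rw [Real.norm_eq_abs, Real.norm_eq_abs, sub_zero, abs_of_nonneg hτpos.le] at hmvt
  have hNτ : N τ ≤ ε ^ 2 + M * ε ^ 2 * τ := by
    have := abs_sub_abs_le_abs_sub (N τ) (N 0)
    have h1 : N τ - N 0 ≤ M * ε ^ 2 * τ := (le_abs_self _).trans hmvt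
    linarith
  -- M * t ≤ 5/4
  have hMt : M * t ≤ 5 / 4 := by
    have h1 : t * D ≤ 5 / (4 * C * (3 / 2 : ℝ) ^ (r + 1)) := by
      rw [← le_div_iff₀ hD0]; exact htm
    have h2 : M * t = C * (3 / 2 : ℝ) ^ (r + 1) * (t * D) := by rw [hMdef]; ring
    rw [h2]
    have h3 : C * (3 / 2 : ℝ) ^ (r + 1) * (5 / (4 * C * (3 / 2 : ℝ) ^ (r + 1))) = 5 / 4 := by
      field_simp
    calc C * (3 / 2 : ℝ) ^ (r + 1) * (t * D)
        ≤ C * (3 / 2 : ℝ) ^ (r + 1) * (5 / (4 * C * (3 / 2 : ℝ) ^ (r + 1))) := by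
          apply mul_le_mul_of_nonneg_left h1 (by positivity)
      _ = 5 / 4 := h3
  -- conclude
  have hε2 : (0:ℝ) < ε ^ 2 := by positivity
  have h54 : 5 / 4 ≤ M * τ := by nlinarith [hε2, hNτ, hτge]
  have hτeqt : τ = t := le_antisymm hτt (by nlinarith [hMt, h54, hM0])
  rw [hτeqt] at hτle
  linarith
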